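/- arXiv:1308.3934 — 3 statements merged into one kernel-verified Lean document; each statement's English description precedes it below -/
import Mathlib

section
/- There is an absolute constant C > 0 such that for all real V ≥ 1, T ≥ 1 and τ ∈ [0,1], one has ∫_V^{V(1+τ)} |Σ_{|γ| ≤ T} u^{iγ}|² du ≤ C·V·τ·F(V,T,τ). -/
open scoped BigOperators

noncomputable section

attribute [local instance] Classical.propDecidable

/-- The multiplicity (analytic order) of `riemannZeta` at `ρ`, as a natural number. -/
def zetaOrder (ρ : ℂ) : ℕ :=
  if h : AnalyticAt ℂ riemannZeta ρ then (analyticOrderAt riemannZeta ρ).toNat else 0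

/-- `ρ` is a nontrivial zero of the Riemann zeta function. -/
def IsNontrivialZero (ρ : ℂ) : Prop :=
  riemannZeta ρ = 0 ∧ 0 < ρ.re ∧ ρ.re < 1

/-- Weight of `ρ`: its multiplicity if it is a nontrivial zero with `|Im ρ| ≤ T`, else `0`. -/
def zw (T : ℝ) (ρ : ℂ) : ℕ :=
  if IsNontrivialZero ρ ∧ |ρ.im| ≤ T then zetaOrder ρ else 0

/-- Weight of `ρ`: its multiplicity if it is a nontrivial zero with `U < |Im ρ| ≤ T`, else `0`. -/
def zwU (U T : ℝ) (ρ : ℂ) : ℕ :=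
  if IsNontrivialZero ρ ∧ U < |ρ.im| ∧ |ρ.im| ≤ T then zetaOrder ρ else 0

/-- The extended pair-correlation function
`F(X,T,τ) = 4 Σ_{-T ≤ γ,γ' ≤ T} X^{i(γ-γ')}/(4+τ²(γ-γ')²)`,
the (real-valued) sum being over ordered pairs of imaginary parts of nontrivial zeta
zeros in `[-T,T]`, counted with multiplicity. -/
def Fpc (X T τ : ℝ) : ℝ :=
  4 * ∑ᶠ ρ : ℂ, ∑ᶠ ρ' : ℂ, (zw T ρ : ℝ) * (zw T ρ') *
    (((X : ℂ) ^ (Complex.I * ((ρ.im - ρ'.im : ℝ) : ℂ))).re /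
      (4 + τ ^ 2 * (ρ.im - ρ'.im) ^ 2))

/-- `Σ(X,T) = Σ_{|γ| ≤ T} X^{iγ}` over imaginary parts of nontrivial zeta zeros,
counted with multiplicity. -/
def SigmaXT (X T : ℝ) : ℂ :=
  ∑ᶠ ρ : ℂ, (zw T ρ : ℂ) * (X : ℂ) ^ (Complex.I * (ρ.im : ℂ))

/-- `Σ(X,U,T) = Σ_{U < |γ| ≤ T} X^{iγ}`. -/
def SigmaUT (X U T : ℝ) : ℂ :=
  ∑ᶠ ρ : ℂ, (zwU U T ρ : ℂ) * (X : ℂ) ^ (Complex.I * (ρ.im : ℂ))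

/-- `Σ(X,T;v) = Σ_{|γ| ≤ T} X^{iγ} e^{iγv}`. -/
def SigmaV (X T v : ℝ) : ℂ :=
  ∑ᶠ ρ : ℂ, (zw T ρ : ℂ) * (X : ℂ) ^ (Complex.I * (ρ.im : ℂ)) *
    Complex.exp (Complex.I * (ρ.im : ℝ) * (v : ℂ))

/-- The Chebyshev function `ψ(x) = Σ_{n ≤ x} Λ(n)`. -/
def psi (x : ℝ) : ℝ :=
  ∑ n ∈ Finset.Iic ⌊x⌋₊, ArithmeticFunction.vonMangoldt n

/-- `J(X,Y,h) = ∫_X^{X+Y} (ψ(x+h) - ψ(x) - h)² dx`. -/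
def Jpc (X Y h : ℝ) : ℝ :=
  ∫ x in X..(X + Y), (psi (x + h) - psi x - h) ^ 2

/-- The Riemann Hypothesis: every nontrivial zero of zeta has real part `1/2`. -/
def RH : Prop :=
  ∀ ρ : ℂ, IsNontrivialZero ρ → ρ.re = 1 / 2

/-- Hypothesis `H(η)` for fixed `0 < η < 1`: RH holds, and for every `ε > 0`
there is `C > 0` such that `F(X,T,τ) ≤ C T X^ε` for all sufficiently large `X`,
uniformly for `X^η ≤ T ≤ X` and `X^η/T ≤ τ ≤ 1`. -/
def HypH (η : ℝ) : Prop :=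
  RH ∧ ∀ ε : ℝ, 0 < ε → ∃ C : ℝ, 0 < C ∧ ∃ X₀ : ℝ, ∀ X : ℝ, X₀ ≤ X →
    ∀ T : ℝ, X ^ η ≤ T → T ≤ X → ∀ τ : ℝ, X ^ η / T ≤ τ → τ ≤ 1 →
      Fpc X T τ ≤ C * T * X ^ ε

/-- Hypothesis `H(0)`: RH holds, and for every `ε > 0` there is `C > 0` such that
`F(X,T,τ) ≤ C T X^ε` for all sufficiently large `X`, uniformly for
`X^ε ≤ T ≤ X` and `0 ≤ τ ≤ 1`. -/
def HypH0 : Prop :=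
  RH ∧ ∀ ε : ℝ, 0 < ε → ∃ C : ℝ, 0 < C ∧ ∃ X₀ : ℝ, ∀ X : ℝ, X₀ ≤ X →
    ∀ T : ℝ, X ^ ε ≤ T → T ≤ X → ∀ τ : ℝ, 0 ≤ τ → τ ≤ 1 →
      Fpc X T τ ≤ C * T * X ^ ε

-- ========== auxiliary lemmas ==========

open Set Filter Complex MeasureTheory intervalIntegral Real in
lemma pc_finite (T : ℝ) : {ρ : ℂ | IsNontrivialZero ρ ∧ |ρ.im| ≤ T}.Finite := by
  by_contra hinf
  rw [← Set.not_infinite, not_not] at hinf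
  set Z := {ρ : ℂ | IsNontrivialZero ρ ∧ |ρ.im| ≤ T} with hZ
  have hsub : Z ⊆ Metric.closedBall 0 (1 + |T|) := by
    intro z hz
    obtain ⟨⟨_, h0, h1⟩, hT⟩ := hz
    rw [Metric.mem_closedBall, dist_zero_right]
    calc ‖z‖ ≤ |z.re| + |z.im| := Complex.norm_le_abs_re_add_abs_im z
      _ ≤ 1 + |T| := by
          have : |z.re| ≤ 1 := abs_le.2 ⟨by linarith, by linarith⟩
          have h2 : |z.im| ≤ |T| := hT.trans (le_abs_self T)
          linarith
  obtain ⟨z₀, -, hacc⟩ := hinf.exists_accPt_of_subset_isCompact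
    (isCompact_closedBall 0 (1 + |T|)) hsub
  have hfreq : ∃ᶠ z in nhdsWithin z₀ {z₀}ᶜ, riemannZeta z = 0 := by
    have : (nhdsWithin z₀ {z₀}ᶜ ⊓ Filter.principal Z).NeBot := hacc
    have h1 : ∃ᶠ z in nhdsWithin z₀ {z₀}ᶜ, z ∈ Z := by
      rw [Filter.frequently_iff_neBot]
      exact this
    exact h1.mono fun z hz => hz.1.1
  have hz₀ne : z₀ ≠ 1 := by
    intro h
    subst h
    have := riemannZeta_residue_one
    have hne : ∀ᶠ z in nhdsWithin (1:ℂ) {(1:ℂ)}ᶜ, (z - 1) * riemannZeta z ≠ 0 :=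
      this.eventually_ne one_ne_zero
    have hne2 : ∀ᶠ z in nhdsWithin (1:ℂ) {(1:ℂ)}ᶜ, riemannZeta z ≠ 0 := by
      filter_upwards [hne] with z hz
      exact fun h => hz (by rw [h, mul_zero])
    exact (hfreq.and_eventually hne2).exists.elim fun z hz => hz.2 hz.1
  have hU : IsOpen ({(1:ℂ)}ᶜ : Set ℂ) := isOpen_compl_singleton
  have hAn : AnalyticOnNhd ℂ riemannZeta ({(1:ℂ)}ᶜ : Set ℂ) := by
    apply DifferentiableOn.analyticOnNhd _ hU
    exact fun z hz => (differentiableAt_riemannZeta hz).differentiableWithinAt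
  have hconn : IsPreconnected ({(1:ℂ)}ᶜ : Set ℂ) :=
    (isConnected_compl_singleton_of_one_lt_rank
      (rank_real_complex ▸ Nat.one_lt_ofNat) _).isPreconnected
  have heq : Set.EqOn riemannZeta 0 ({(1:ℂ)}ᶜ : Set ℂ) :=
    hAn.eqOn_zero_of_preconnected_of_frequently_eq_zero hconn hz₀ne hfreq
  have h2 : riemannZeta 2 = 0 := heq (by norm_num : (2:ℂ) ∈ ({(1:ℂ)}ᶜ : Set ℂ))
  rw [riemannZeta_two] at h2
  have : (Real.pi : ℂ) ≠ 0 := by exact_mod_cast Real.pi_ne_zero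
  field_simp at h2
  simp [this] at h2

open Set Filter Complex MeasureTheory intervalIntegral Real in
lemma pc_integrableOn_cexp {c : ℂ} (hc : c.re < 0) :
    IntegrableOn (fun v : ℝ => Complex.exp (c * v)) (Set.Ioi (0:ℝ)) := by
  have hb : (0:ℝ) < -c.re := by linarith
  have base := exp_neg_integrableOn_Ioi 0 hb
  refine base.mono' ?_ ?_
  · exact (Complex.continuous_exp.comp (continuous_const.mul Complex.continuous_ofReal)).aestronglyMeasurable
  · filter_upwards with v
    rw [Complex.norm_exp]
    simp [Complex.mul_re]

open Set Filter Complex MeasureTheory intervalIntegral Real in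
lemma pc_integral_cexp {c : ℂ} (hc : c.re < 0) :
    ∫ v in Set.Ioi (0:ℝ), Complex.exp (c * v) = -c⁻¹ := by
  have hc0 : c ≠ 0 := fun h => by simp [h] at hc
  have h1 := intervalIntegral_tendsto_integral_Ioi 0 (pc_integrableOn_cexp hc) tendsto_id
  have h2 : Filter.Tendsto (fun b : ℝ => ∫ x in (0:ℝ)..(id b), Complex.exp (c * x))
      Filter.atTop (nhds (-c⁻¹)) := by
    simp only [id]
    have : ∀ b : ℝ, (∫ x in (0:ℝ)..b, Complex.exp (c * x))
        = (Complex.exp (c * b) - 1) / c := by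
      intro b
      rw [integral_exp_mul_complex hc0]
      norm_num
    simp only [this]
    have hlim : Filter.Tendsto (fun b : ℝ => Complex.exp (c * b)) Filter.atTop (nhds 0) := by
      rw [tendsto_zero_iff_norm_tendsto_zero]
      have : ∀ b : ℝ, ‖Complex.exp (c * b)‖ = Real.exp (c.re * b) := by
        intro b; rw [Complex.norm_exp]; simp [Complex.mul_re]
      simp only [this]
      exact Real.tendsto_exp_atBot.comp (tendsto_id.const_mul_atTop_of_neg hc)
    have : Filter.Tendsto (fun b : ℝ => (Complex.exp (c * b) - 1) / c)
        Filter.atTop (nhds ((0 - 1) / c)) := (hlim.sub_const 1).div_const c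
    have heq : ((0:ℂ) - 1) / c = -c⁻¹ := by field_simp; ring
    rwa [heq] at this
  exact tendsto_nhds_unique h1 h2

open Set Filter Complex MeasureTheory intervalIntegral Real in
lemma pc_weight_integrable {b : ℝ} (hb : 0 < b) :
    Integrable (fun v : ℝ => Real.exp (-b * |v|)) := by
  have hIoi : IntegrableOn (fun v : ℝ => Real.exp (-b * |v|)) (Set.Ioi (0:ℝ)) := by
    refine ((exp_neg_integrableOn_Ioi 0 hb)).congr_fun ?_ measurableSet_Ioi
    intro v hv; simp [abs_of_pos (mem_Ioi.1 hv)]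
  have hIic : IntegrableOn (fun v : ℝ => Real.exp (-b * |v|)) (Set.Iic (0:ℝ)) := by
    rw [← (Measure.measurePreserving_neg (volume : Measure ℝ)).integrableOn_comp_preimage
        (Homeomorph.neg ℝ).measurableEmbedding]
    simp only [Function.comp_def, abs_neg, neg_preimage, neg_Iic, neg_zero]
    exact (integrableOn_Ici_iff_integrableOn_Ioi (by simp)).mpr hIoi
  rw [← integrableOn_univ, ← Set.Iic_union_Ioi (a := (0:ℝ))]
  exact hIic.union hIoi

open Set Filter Complex MeasureTheory intervalIntegral Real in
lemma pc_key_integrable {b : ℝ} (hb : 0 < b) (δ : ℝ) :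
    Integrable (fun v : ℝ => Complex.exp (Complex.I * δ * v) * (Real.exp (-b * |v|) : ℂ)) := by
  refine (pc_weight_integrable hb).mono' ?_ ?_
  · apply Continuous.aestronglyMeasurable
    exact (Complex.continuous_exp.comp ((continuous_const.mul Complex.continuous_ofReal))).mul
      (Complex.continuous_ofReal.comp (Real.continuous_exp.comp (continuous_const.mul continuous_abs)))
  · filter_upwards with v
    rw [norm_mul, Complex.norm_exp, Complex.norm_real, Real.norm_eq_abs]
    have : (Complex.I * δ * v).re = 0 := by simp [Complex.mul_re]
    rw [this, Real.exp_zero, one_mul, abs_of_pos (Real.exp_pos _)]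

open Set Filter Complex MeasureTheory intervalIntegral Real in
lemma pc_key {b : ℝ} (hb : 0 < b) (δ : ℝ) :
    (∫ v : ℝ, Complex.exp (Complex.I * δ * v) * (Real.exp (-b * |v|) : ℂ))
      = ((2 * b / (b ^ 2 + δ ^ 2) : ℝ) : ℂ) := by
  have hint := pc_key_integrable hb δ
  rw [← integral_Iic_add_Ioi hint.integrableOn hint.integrableOn]
  have hIoi : (∫ v in Set.Ioi (0:ℝ), Complex.exp (Complex.I * δ * v) * (Real.exp (-b * |v|) : ℂ))
      = ((b : ℂ) - Complex.I * δ)⁻¹ := by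
    rw [setIntegral_congr_fun measurableSet_Ioi
      (show Set.EqOn (fun v : ℝ => Complex.exp (Complex.I * δ * v) * (Real.exp (-b * |v|) : ℂ))
        (fun v : ℝ => Complex.exp ((Complex.I * δ - b) * v)) (Set.Ioi 0) by
        intro v hv
        dsimp only
        rw [abs_of_pos (Set.mem_Ioi.1 hv)]
        rw [Complex.ofReal_exp, ← Complex.exp_add]
        congr 1
        push_cast
        ring)]
    rw [pc_integral_cexp (by simp [Complex.sub_re, Complex.mul_re]; linarith)]
    rw [← inv_neg]
    congr 1
    ring
  have hIic : (∫ v in Set.Iic (0:ℝ), Complex.exp (Complex.I * δ * v) * (Real.exp (-b * |v|) : ℂ))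
      = ((b : ℂ) + Complex.I * δ)⁻¹ := by
    rw [setIntegral_congr_fun measurableSet_Iic
      (show Set.EqOn (fun v : ℝ => Complex.exp (Complex.I * δ * v) * (Real.exp (-b * |v|) : ℂ))
        (fun v : ℝ => Complex.exp ((Complex.I * δ + b) * v)) (Set.Iic 0) by
        intro v hv
        dsimp only
        rw [abs_of_nonpos (Set.mem_Iic.1 hv)]
        rw [Complex.ofReal_exp, ← Complex.exp_add]
        congr 1
        push_cast
        ring)]
    have := integral_comp_neg_Ioi (c := (0:ℝ))
      (f := fun v : ℝ => Complex.exp ((Complex.I * δ + b) * v))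
    rw [neg_zero] at this
    rw [← this]
    have heq : ∀ x : ℝ, Complex.exp ((Complex.I * δ + b) * (-x : ℝ))
        = Complex.exp ((-(Complex.I * δ + b)) * x) := by
      intro x; congr 1; push_cast; ring
    simp only [heq]
    rw [pc_integral_cexp (by simp [Complex.neg_re, Complex.add_re, Complex.mul_re]; linarith)]
    rw [neg_inv, neg_neg]
    congr 1
    ring
  rw [hIic, hIoi]
  have h1 : ((b : ℂ) + Complex.I * δ) ≠ 0 := by
    intro h
    have := congrArg Complex.re h
    simp [Complex.add_re, Complex.mul_re] at this
    linarith
  have h2 : ((b : ℂ) - Complex.I * δ) ≠ 0 := by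
    intro h
    have := congrArg Complex.re h
    simp [Complex.sub_re, Complex.mul_re] at this
    linarith
  have hden : ((b : ℝ) ^ 2 + δ ^ 2) ≠ 0 := by positivity
  have hdenC : ((b : ℂ) ^ 2 + (δ : ℂ) ^ 2) ≠ 0 := by
    have : ((b : ℂ) ^ 2 + (δ : ℂ) ^ 2) = ((b ^ 2 + δ ^ 2 : ℝ) : ℂ) := by push_cast; ring
    rw [this, Ne, Complex.ofReal_eq_zero]; exact hden
  rw [inv_add_inv h1 h2]
  push_cast
  rw [div_eq_div_iff (mul_ne_zero h1 h2) hdenC]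
  ring_nf
  simp [Complex.I_sq]

lemma pc_cpow {x : ℝ} (hx : 0 < x) (c : ℝ) :
    (x : ℂ) ^ (Complex.I * (c : ℂ)) = Complex.exp (Complex.I * c * (Real.log x : ℂ)) := by
  rw [Complex.cpow_def_of_ne_zero (by exact_mod_cast hx.ne'), ← Complex.ofReal_log hx.le]
  congr 1
  ring

-- ========== main theorem ==========

/-- Lemma 3: For `V, T ≥ 1` and `τ ∈ [0,1]`,
`∫_V^{V(1+τ)} |Σ_{|γ| ≤ T} u^{iγ}|² du ≤ C V τ F(V,T,τ)`. -/
theorem integral_SigmaXT_sq_bound :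
    ∃ C : ℝ, 0 < C ∧ ∀ V T τ : ℝ, 1 ≤ V → 1 ≤ T → 0 ≤ τ → τ ≤ 1 →
      (∫ u in V..(V * (1 + τ)), ‖SigmaXT u T‖ ^ 2) ≤ C * V * τ * Fpc V T τ := by
  refine ⟨Real.exp 3, Real.exp_pos 3, ?_⟩
  intro V T τ hV hT hτ0 hτ1
  rcases eq_or_lt_of_le hτ0 with h0 | hτpos
  · rw [← h0]
    norm_num
  have hV0 : (0:ℝ) < V := lt_of_lt_of_le one_pos hV
  set a := Real.log V with ha
  set b := 2 / τ with hbdef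
  have hbpos : 0 < b := by positivity
  have hfin := pc_finite T
  set s := hfin.toFinset with hsdef
  have hzw_mem : ∀ ρ : ℂ, zw T ρ ≠ 0 → ρ ∈ s := by
    intro ρ h
    rw [hsdef, Set.Finite.mem_toFinset]
    by_contra hc
    rw [Set.mem_setOf_eq] at hc
    exact h (by simp only [zw, if_neg hc])
  set g : ℝ → ℂ := fun t => ∑ ρ ∈ s, (zw T ρ : ℂ) * Complex.exp (Complex.I * ρ.im * t)
    with hgdef
  have hg_cont : Continuous g := by
    apply continuous_finset_sum
    intro ρ _
    exact continuous_const.mul (Complex.continuous_exp.comp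
      (continuous_const.mul Complex.continuous_ofReal))
  have hSig : ∀ u : ℝ, 0 < u → SigmaXT u T = g (Real.log u) := by
    intro u hu
    rw [SigmaXT, hgdef]
    rw [finsum_eq_finset_sum_of_support_subset _ (s := s) ?_]
    · exact Finset.sum_congr rfl fun ρ _ => by rw [pc_cpow hu]
    · intro ρ hρ
      simp only [Function.mem_support] at hρ
      apply hzw_mem
      intro h0
      exact hρ (by rw [h0]; simp)
  have hF : Fpc V T τ = 4 * ∑ ρ ∈ s, ∑ ρ' ∈ s, (zw T ρ : ℝ) * (zw T ρ') *
      ((Complex.exp (Complex.I * ((ρ.im - ρ'.im : ℝ) : ℂ) * (a : ℂ))).re /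
        (4 + τ ^ 2 * (ρ.im - ρ'.im) ^ 2)) := by
    rw [Fpc]
    congr 1
    rw [finsum_eq_finset_sum_of_support_subset _ (s := s) ?_]
    · refine Finset.sum_congr rfl fun ρ _ => ?_
      rw [finsum_eq_finset_sum_of_support_subset _ (s := s) ?_]
      · exact Finset.sum_congr rfl fun ρ' _ => by rw [pc_cpow hV0]
      · intro ρ' hρ'
        simp only [Function.mem_support] at hρ'
        apply hzw_mem
        intro h0
        exact hρ' (by rw [h0]; simp)
    · intro ρ hρ
      simp only [Function.mem_support] at hρ
      apply hzw_mem
      intro h0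
      exact hρ (by rw [h0]; simp)
  -- interval setup
  set L := Real.log (1 + τ) with hLdef
  have h1τ : (0:ℝ) < 1 + τ := by linarith
  have hL0 : (0:ℝ) ≤ L := Real.log_nonneg (by linarith)
  have hLτ : L ≤ τ := by
    have := Real.log_le_sub_one_of_pos h1τ
    linarith
  have cont_absg : Continuous (fun v : ℝ => ‖g (a + v)‖ ^ 2) :=
    (continuous_norm.comp (hg_cont.comp (continuous_const.add continuous_id))).pow 2
  -- Step A : rewrite the integrand
  have hA : (∫ u in V..(V * (1 + τ)), ‖SigmaXT u T‖ ^ 2)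
      = ∫ u in V..(V * (1 + τ)), ‖g (Real.log u)‖ ^ 2 := by
    apply intervalIntegral.integral_congr
    intro u hu
    rw [Set.uIcc_of_le (by nlinarith : V ≤ V * (1 + τ))] at hu
    show ‖SigmaXT u T‖ ^ 2 = _
    rw [hSig u (lt_of_lt_of_le hV0 hu.1)]
  -- Step B : substitution u = V e^v
  have hB : (∫ u in V..(V * (1 + τ)), ‖g (Real.log u)‖ ^ 2)
      = ∫ v in (0:ℝ)..L, (V * Real.exp v) * ‖g (a + v)‖ ^ 2 := by
    have hder : ∀ x ∈ Set.uIcc (0:ℝ) L, HasDerivAt (fun v : ℝ => V * Real.exp v)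
        (V * Real.exp x) x := fun x _ => (Real.hasDerivAt_exp x).const_mul V
    have hcont' : ContinuousOn (fun v : ℝ => V * Real.exp v) (Set.uIcc (0:ℝ) L) :=
      (continuous_const.mul Real.continuous_exp).continuousOn
    have hGcont : ContinuousOn (fun u : ℝ => ‖g (Real.log u)‖ ^ 2)
        ((fun v : ℝ => V * Real.exp v) '' Set.uIcc (0:ℝ) L) := by
      apply ContinuousOn.mono (s := {(0:ℝ)}ᶜ)
        ((continuous_norm.comp_continuousOn
          (hg_cont.comp_continuousOn Real.continuousOn_log)).pow 2)
      rintro _ ⟨x, -, rfl⟩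
      simp only [Set.mem_compl_iff, Set.mem_singleton_iff]
      positivity
    have hsub := intervalIntegral.integral_comp_smul_deriv' hder hcont' hGcont
    rw [Real.exp_zero, mul_one, Real.exp_log h1τ] at hsub
    rw [← hsub]
    apply intervalIntegral.integral_congr
    intro v _
    simp only [Function.comp_apply, smul_eq_mul]
    rw [Real.log_mul (ne_of_gt hV0) (Real.exp_ne_zero v), Real.log_exp]
  -- Step C : pointwise bound on the interval
  have hint1 : IntervalIntegrable (fun v : ℝ => (V * Real.exp v) * ‖g (a + v)‖ ^ 2)
      MeasureTheory.volume 0 L :=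
    ((continuous_const.mul Real.continuous_exp).mul cont_absg).intervalIntegrable 0 L
  have hwcont : Continuous (fun v : ℝ => Real.exp (-b * |v|)) :=
    Real.continuous_exp.comp (continuous_const.mul continuous_abs)
  have hint2 : IntervalIntegrable
      (fun v : ℝ => Real.exp 3 * V * (Real.exp (-b * |v|) * ‖g (a + v)‖ ^ 2))
      MeasureTheory.volume 0 L :=
    (continuous_const.mul (hwcont.mul cont_absg)).intervalIntegrable 0 L
  have hC : (∫ v in (0:ℝ)..L, (V * Real.exp v) * ‖g (a + v)‖ ^ 2)
      ≤ ∫ v in (0:ℝ)..L,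
          Real.exp 3 * V * (Real.exp (-b * |v|) * ‖g (a + v)‖ ^ 2) := by
    apply intervalIntegral.integral_mono_on hL0 hint1 hint2
    intro v hv
    obtain ⟨hv0, hvL⟩ := hv
    have hvτ : v ≤ τ := le_trans hvL hLτ
    have h1 : Real.exp v ≤ Real.exp 3 * Real.exp (-b * |v|) := by
      rw [← Real.exp_add]
      apply Real.exp_le_exp.2
      rw [_root_.abs_of_nonneg hv0, hbdef]
      have h2 : 2 / τ * v ≤ 2 := by
        rw [div_mul_eq_mul_div, div_le_iff₀ hτpos]
        nlinarith
      linarith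
    calc (V * Real.exp v) * ‖g (a + v)‖ ^ 2
        ≤ (V * (Real.exp 3 * Real.exp (-b * |v|))) * ‖g (a + v)‖ ^ 2 := by
          apply mul_le_mul_of_nonneg_right _ (by positivity)
          exact mul_le_mul_of_nonneg_left h1 (le_of_lt hV0)
      _ = Real.exp 3 * V * (Real.exp (-b * |v|) * ‖g (a + v)‖ ^ 2) := by ring
  -- bound on g
  set M := ∑ ρ ∈ s, (zw T ρ : ℝ) with hMdef
  have hgM : ∀ t : ℝ, ‖g t‖ ≤ M := by
    intro t
    rw [hgdef, hMdef]
    refine le_trans (norm_sum_le _ _) ?_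
    apply Finset.sum_le_sum
    intro ρ _
    rw [norm_mul, Complex.norm_natCast, Complex.norm_exp]
    have h0 : (Complex.I * ρ.im * t).re = 0 := by simp [Complex.mul_re]
    rw [h0, Real.exp_zero, mul_one]
  have h2int : MeasureTheory.Integrable
      (fun v : ℝ => Real.exp (-b * |v|) * ‖g (a + v)‖ ^ 2) := by
    refine ((pc_weight_integrable hbpos).const_mul (M ^ 2)).mono'
      ((hwcont.mul cont_absg).aestronglyMeasurable) ?_
    filter_upwards with v
    rw [Real.norm_eq_abs, _root_.abs_of_nonneg (by positivity)]
    have h3 := hgM (a + v)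
    have h4 : ‖g (a + v)‖ ^ 2 ≤ M ^ 2 := by
      have := norm_nonneg (g (a + v))
      nlinarith
    have h5 := (Real.exp_pos (-b * |v|)).le
    calc Real.exp (-b * |v|) * ‖g (a + v)‖ ^ 2
        ≤ Real.exp (-b * |v|) * M ^ 2 := mul_le_mul_of_nonneg_left h4 h5
      _ = M ^ 2 * Real.exp (-b * |v|) := by ring
  -- Step D : extend integral to the whole line
  have hD : (∫ v in (0:ℝ)..L,
        Real.exp 3 * V * (Real.exp (-b * |v|) * ‖g (a + v)‖ ^ 2))
      ≤ Real.exp 3 * V * ∫ v : ℝ, Real.exp (-b * |v|) * ‖g (a + v)‖ ^ 2 := by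
    rw [intervalIntegral.integral_const_mul]
    apply mul_le_mul_of_nonneg_left _ (by positivity)
    rw [intervalIntegral.integral_of_le hL0]
    exact MeasureTheory.setIntegral_le_integral h2int
      (Filter.Eventually.of_forall fun v => by positivity)
  -- Step E : compute the full-line integral
  have hgg : ∀ t : ℝ, g t * (starRingEnd ℂ) (g t)
      = ∑ ρ ∈ s, ∑ ρ' ∈ s, ((zw T ρ : ℂ) * (zw T ρ')
          * Complex.exp (Complex.I * ((ρ.im - ρ'.im : ℝ) : ℂ) * (t : ℂ))) := by
    intro t
    rw [hgdef]
    dsimp only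
    rw [map_sum, Finset.sum_mul_sum]
    refine Finset.sum_congr rfl fun ρ _ => Finset.sum_congr rfl fun ρ' _ => ?_
    rw [map_mul, show (starRingEnd ℂ) ((zw T ρ' : ℕ) : ℂ) = ((zw T ρ' : ℕ) : ℂ) from
      map_natCast _ _, ← Complex.exp_conj]
    rw [show (starRingEnd ℂ) (Complex.I * (ρ'.im : ℂ) * (t : ℂ))
        = -(Complex.I * (ρ'.im : ℂ) * (t : ℂ)) by
      simp only [map_mul, Complex.conj_I, Complex.conj_ofReal]; ring]
    rw [mul_mul_mul_comm, ← Complex.exp_add]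
    congr 2
    push_cast
    ring
  set Sterm : ℂ → ℂ → ℝ → ℂ := fun ρ ρ' v =>
    ((zw T ρ : ℂ) * (zw T ρ')
      * Complex.exp (Complex.I * ((ρ.im - ρ'.im : ℝ) : ℂ) * ((a + v : ℝ) : ℂ)))
      * (Real.exp (-b * |v|) : ℂ) with hStermdef
  have hsplit : ∀ (ρ ρ' : ℂ) (v : ℝ), Sterm ρ ρ' v
      = ((zw T ρ : ℂ) * (zw T ρ')
          * Complex.exp (Complex.I * ((ρ.im - ρ'.im : ℝ) : ℂ) * (a : ℂ)))
        * (Complex.exp (Complex.I * ((ρ.im - ρ'.im : ℝ) : ℂ) * (v : ℂ))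
            * (Real.exp (-b * |v|) : ℂ)) := by
    intro ρ ρ' v
    rw [hStermdef]
    dsimp only
    rw [show Complex.I * ((ρ.im - ρ'.im : ℝ) : ℂ) * ((a + v : ℝ) : ℂ)
        = Complex.I * ((ρ.im - ρ'.im : ℝ) : ℂ) * (a : ℂ)
          + Complex.I * ((ρ.im - ρ'.im : ℝ) : ℂ) * (v : ℂ) by push_cast; ring]
    rw [Complex.exp_add]
    ring
  have hSterm_int : ∀ ρ ρ' : ℂ, MeasureTheory.Integrable (Sterm ρ ρ') := by
    intro ρ ρ'
    have heq : Sterm ρ ρ' = fun v : ℝ =>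
        ((zw T ρ : ℂ) * (zw T ρ')
          * Complex.exp (Complex.I * ((ρ.im - ρ'.im : ℝ) : ℂ) * (a : ℂ)))
        * (Complex.exp (Complex.I * ((ρ.im - ρ'.im : ℝ) : ℂ) * (v : ℂ))
            * (Real.exp (-b * |v|) : ℂ)) := funext fun v => hsplit ρ ρ' v
    rw [heq]
    exact (pc_key_integrable hbpos (ρ.im - ρ'.im)).const_mul _
  have hSterm_val : ∀ ρ ρ' : ℂ, (∫ v : ℝ, Sterm ρ ρ' v)
      = ((zw T ρ : ℂ) * (zw T ρ')
          * Complex.exp (Complex.I * ((ρ.im - ρ'.im : ℝ) : ℂ) * (a : ℂ)))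
        * ((2 * b / (b ^ 2 + (ρ.im - ρ'.im) ^ 2) : ℝ) : ℂ) := by
    intro ρ ρ'
    simp only [hsplit]
    rw [MeasureTheory.integral_const_mul, pc_key hbpos (ρ.im - ρ'.im)]
  have hallint : MeasureTheory.Integrable (fun v : ℝ => ∑ ρ ∈ s, ∑ ρ' ∈ s, Sterm ρ ρ' v) := by
    apply MeasureTheory.integrable_finset_sum
    intro ρ _
    exact MeasureTheory.integrable_finset_sum _ fun ρ' _ => hSterm_int ρ ρ'
  have hre : ∀ v : ℝ, Real.exp (-b * |v|) * ‖g (a + v)‖ ^ 2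
      = (∑ ρ ∈ s, ∑ ρ' ∈ s, Sterm ρ ρ' v).re := by
    intro v
    have habs : (‖g (a + v)‖) ^ 2
        = (g (a + v) * (starRingEnd ℂ) (g (a + v))).re := by
      rw [Complex.mul_conj]
      simp [Complex.sq_norm]
    rw [habs, hgg (a + v)]
    rw [show (∑ ρ ∈ s, ∑ ρ' ∈ s, Sterm ρ ρ' v)
        = (∑ ρ ∈ s, ∑ ρ' ∈ s, ((zw T ρ : ℂ) * (zw T ρ')
            * Complex.exp (Complex.I * ((ρ.im - ρ'.im : ℝ) : ℂ) * ((a + v : ℝ) : ℂ))))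
          * (Real.exp (-b * |v|) : ℂ) by
      rw [Finset.sum_mul]
      exact Finset.sum_congr rfl fun ρ _ => (Finset.sum_mul _ _ _).symm]
    rw [show ∀ (z : ℂ) (r : ℝ), (z * (r : ℂ)).re = r * z.re from fun z r => by
      simp [Complex.mul_re]; ring]
  have hE : (∫ v : ℝ, Real.exp (-b * |v|) * ‖g (a + v)‖ ^ 2) = τ * Fpc V T τ := by
    have step1 : (∫ v : ℝ, Real.exp (-b * |v|) * ‖g (a + v)‖ ^ 2)
        = (∫ v : ℝ, ∑ ρ ∈ s, ∑ ρ' ∈ s, Sterm ρ ρ' v).re := by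
      rw [show (fun v : ℝ => Real.exp (-b * |v|) * ‖g (a + v)‖ ^ 2)
          = fun v : ℝ => (∑ ρ ∈ s, ∑ ρ' ∈ s, Sterm ρ ρ' v).re from funext hre]
      have := integral_re hallint
      simpa using this
    rw [step1]
    rw [MeasureTheory.integral_finset_sum _ fun ρ _ =>
      MeasureTheory.integrable_finset_sum _ fun ρ' _ => hSterm_int ρ ρ']
    rw [show (∑ ρ ∈ s, ∫ v : ℝ, ∑ ρ' ∈ s, Sterm ρ ρ' v)
        = ∑ ρ ∈ s, ∑ ρ' ∈ s, ∫ v : ℝ, Sterm ρ ρ' v from Finset.sum_congr rfl fun ρ _ =>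
      MeasureTheory.integral_finset_sum _ fun ρ' _ => hSterm_int ρ ρ']
    simp only [hSterm_val]
    have hterm_re : ∀ ρ ρ' : ℂ,
        (((zw T ρ : ℂ) * (zw T ρ')
          * Complex.exp (Complex.I * ((ρ.im - ρ'.im : ℝ) : ℂ) * (a : ℂ)))
          * ((2 * b / (b ^ 2 + (ρ.im - ρ'.im) ^ 2) : ℝ) : ℂ)).re
        = (zw T ρ : ℝ) * (zw T ρ')
          * (Complex.exp (Complex.I * ((ρ.im - ρ'.im : ℝ) : ℂ) * (a : ℂ))).re
          * (2 * b / (b ^ 2 + (ρ.im - ρ'.im) ^ 2)) := by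
      intro ρ ρ'
      have hc : ((zw T ρ : ℂ) * (zw T ρ')) = (((zw T ρ : ℝ) * (zw T ρ' : ℝ) : ℝ) : ℂ) := by
        push_cast; ring
      rw [mul_assoc, hc]
      set z := Complex.exp (Complex.I * ((ρ.im - ρ'.im : ℝ) : ℂ) * (a : ℂ))
      set x := (zw T ρ : ℝ) * (zw T ρ' : ℝ)
      set r := 2 * b / (b ^ 2 + (ρ.im - ρ'.im) ^ 2)
      rw [show (z * (r : ℂ)) = ((r : ℝ) : ℂ) * z by ring]
      rw [← mul_assoc, ← Complex.ofReal_mul, Complex.re_ofReal_mul]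
      ring
    rw [show (∑ ρ ∈ s, ∑ ρ' ∈ s,
        ((zw T ρ : ℂ) * (zw T ρ')
          * Complex.exp (Complex.I * ((ρ.im - ρ'.im : ℝ) : ℂ) * (a : ℂ)))
          * ((2 * b / (b ^ 2 + (ρ.im - ρ'.im) ^ 2) : ℝ) : ℂ)).re
        = ∑ ρ ∈ s, ∑ ρ' ∈ s, (zw T ρ : ℝ) * (zw T ρ')
          * (Complex.exp (Complex.I * ((ρ.im - ρ'.im : ℝ) : ℂ) * (a : ℂ))).re
          * (2 * b / (b ^ 2 + (ρ.im - ρ'.im) ^ 2)) from by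
      rw [Complex.re_sum]
      exact Finset.sum_congr rfl fun ρ _ => by
        rw [Complex.re_sum]
        exact Finset.sum_congr rfl fun ρ' _ => hterm_re ρ ρ']
    rw [hF, ← mul_assoc]
    rw [show (τ * 4) * (∑ ρ ∈ s, ∑ ρ' ∈ s, (zw T ρ : ℝ) * (zw T ρ') *
        ((Complex.exp (Complex.I * ((ρ.im - ρ'.im : ℝ) : ℂ) * (a : ℂ))).re /
          (4 + τ ^ 2 * (ρ.im - ρ'.im) ^ 2)))
        = ∑ ρ ∈ s, ∑ ρ' ∈ s, (τ * 4) * ((zw T ρ : ℝ) * (zw T ρ') *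
        ((Complex.exp (Complex.I * ((ρ.im - ρ'.im : ℝ) : ℂ) * (a : ℂ))).re /
          (4 + τ ^ 2 * (ρ.im - ρ'.im) ^ 2))) from by
      rw [Finset.mul_sum]
      exact Finset.sum_congr rfl fun ρ _ => Finset.mul_sum _ _ _]
    refine Finset.sum_congr rfl fun ρ _ => Finset.sum_congr rfl fun ρ' _ => ?_
    have hδ : 2 * b / (b ^ 2 + (ρ.im - ρ'.im) ^ 2)
        = 4 * τ / (4 + τ ^ 2 * (ρ.im - ρ'.im) ^ 2) := by
      rw [hbdef, div_eq_div_iff (by positivity) (by positivity)]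
      field_simp
      ring
    rw [hδ]
    ring
  -- put everything together
  rw [hA, hB]
  calc (∫ v in (0:ℝ)..L, (V * Real.exp v) * ‖g (a + v)‖ ^ 2)
      ≤ ∫ v in (0:ℝ)..L,
          Real.exp 3 * V * (Real.exp (-b * |v|) * ‖g (a + v)‖ ^ 2) := hC
    _ ≤ Real.exp 3 * V * ∫ v : ℝ, Real.exp (-b * |v|) * ‖g (a + v)‖ ^ 2 := hD
    _ = Real.exp 3 * V * τ * Fpc V T τ := by rw [hE]; ring

end
end

section
/- Assume Hypothesis H(0), so that in particular every nontrivial zero has the form ρ = 1/2 + iγ. Then for every sufficiently small ε > 0 there exists a constant C > 0 such that for all sufficiently large x and all real h with x^{3ε} ≤ h ≤ x^{1−ε}, one has |Σ_{|γ| ≤ x/h} ∫_x^{x+h} u^{ρ−1} du| ≤ C·h^{1/2}·x^ε. -/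
open scoped BigOperators

noncomputable section

attribute [local instance] Classical.propDecidable

open Filter Set in
lemma zeta_zeros_finite (T : ℝ) :
    {ρ : ℂ | riemannZeta ρ = 0 ∧ ρ.re = 1/2 ∧ |ρ.im| ≤ T}.Finite := by
  set S := {ρ : ℂ | riemannZeta ρ = 0 ∧ ρ.re = 1/2 ∧ |ρ.im| ≤ T} with hS
  by_contra hinf
  rw [← Set.not_infinite, not_not] at hinf
  have hsub : S ⊆ Metric.closedBall 0 (1 + |T|) := by
    intro z hz
    simp only [Metric.mem_closedBall, dist_zero_right]
    calc ‖z‖ ≤ |z.re| + |z.im| := Complex.norm_le_abs_re_add_abs_im z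
    _ ≤ 1 + |T| := by
        have : |z.re| = 1/2 := by rw [hz.2.1]; norm_num
        have him : |z.im| ≤ |T| := le_trans hz.2.2 (le_abs_self T)
        linarith
  obtain ⟨z₀, hz₀K, hacc⟩ :=
    hinf.exists_accPt_of_subset_isCompact (isCompact_closedBall 0 (1 + |T|)) hsub
  have hcl : z₀ ∈ closure S := mem_closure_iff_clusterPt.mpr hacc.clusterPt
  have hre : z₀.re = 1/2 := by
    have : closure S ⊆ {z : ℂ | z.re = 1/2} := by
      apply closure_minimal (fun z hz => hz.2.1)
      exact isClosed_eq (Complex.continuous_re) continuous_const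
    exact this hcl
  have hne1 : z₀ ≠ 1 := by
    intro h; rw [h] at hre; norm_num at hre
  have hana : AnalyticAt ℂ riemannZeta z₀ :=
    (DifferentiableOn.analyticOnNhd
      (fun z hz => (differentiableAt_riemannZeta hz).differentiableWithinAt)
      isOpen_compl_singleton) z₀ hne1
  have hfreq : ∃ᶠ z in nhdsWithin z₀ {z₀}ᶜ, riemannZeta z = 0 := by
    have h := accPt_iff_frequently.mp hacc
    rw [frequently_nhdsWithin_iff]
    exact h.mono (fun z hz => ⟨hz.2.1, hz.1⟩)
  have hev : ∀ᶠ z in nhds z₀, riemannZeta z = 0 :=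
    (hana.frequently_zero_iff_eventually_zero).mp hfreq
  have heqon : Set.EqOn riemannZeta 0 ({1}ᶜ : Set ℂ) := by
    apply AnalyticOnNhd.eqOn_zero_of_preconnected_of_eventuallyEq_zero
      (fun z hz => (DifferentiableOn.analyticOnNhd
        (fun w hw => (differentiableAt_riemannZeta hw).differentiableWithinAt)
        isOpen_compl_singleton) z hz)
      (isConnected_compl_singleton_of_one_lt_rank
        (Complex.rank_real_complex ▸ Nat.one_lt_ofNat) 1).isPreconnected hne1 hev
  have h2 := heqon (show (2:ℂ) ∈ ({1}ᶜ : Set ℂ) by norm_num)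
  rw [riemannZeta_two] at h2
  simp only [Pi.zero_apply, div_eq_zero_iff, OfNat.ofNat_ne_zero, or_false,
    pow_eq_zero_iff, Complex.ofReal_eq_zero] at h2
  exact Real.pi_ne_zero (by simpa using h2)

/-- The finite set of relevant zeros. -/
def zFinset (T : ℝ) : Finset ℂ := (zeta_zeros_finite T).toFinset

lemma zw_ne_mem {T : ℝ} (rh : RH) {ρ : ℂ} (h : zw T ρ ≠ 0) : ρ ∈ zFinset T := by
  rw [zw] at h
  split_ifs at h with hc
  · exact (zeta_zeros_finite T).mem_toFinset.mpr ⟨hc.1.1, rh ρ hc.1, hc.2⟩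
  · exact absurd rfl h

lemma mem_zFinset_re {T : ℝ} {ρ : ℂ} (h : ρ ∈ zFinset T) : ρ.re = 1/2 :=
  ((zeta_zeros_finite T).mem_toFinset.mp h).2.1

lemma finsum_eq_sum_Z {M : Type*} [AddCommMonoid M] (rh : RH) (T : ℝ) (f : ℂ → M)
    (hf : ∀ ρ, zw T ρ = 0 → f ρ = 0) :
    ∑ᶠ ρ : ℂ, f ρ = ∑ ρ ∈ zFinset T, f ρ := by
  apply finsum_eq_sum_of_support_subset
  intro ρ hρ
  simp only [Function.mem_support] at hρ
  by_contra hmem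
  exact hρ (hf ρ (by_contra fun hz => hmem (zw_ne_mem rh hz)))

lemma cpow_I_eq {X : ℝ} (hX : 0 < X) (t : ℝ) :
    (X : ℂ) ^ (Complex.I * (t : ℂ)) =
      Complex.exp (Complex.I * (t : ℂ) * (Real.log X : ℂ)) := by
  rw [Complex.cpow_def_of_ne_zero (by exact_mod_cast hX.ne' : (X:ℂ) ≠ 0),
    ← Complex.ofReal_log hX.le]
  ring_nf

lemma cpow_I_mul_conj {X : ℝ} (hX : 0 < X) (s t : ℝ) :
    (X : ℂ) ^ (Complex.I * (s : ℂ)) *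
      (starRingEnd ℂ) ((X : ℂ) ^ (Complex.I * (t : ℂ))) =
      (X : ℂ) ^ (Complex.I * ((s - t : ℝ) : ℂ)) := by
  rw [cpow_I_eq hX s, cpow_I_eq hX t, cpow_I_eq hX (s - t), ← Complex.exp_conj,
    ← Complex.exp_add]
  congr 1
  simp only [map_mul, Complex.conj_I, Complex.conj_ofReal]
  push_cast
  ring

lemma SigmaXT_eq_sum (rh : RH) (X T : ℝ) :
    SigmaXT X T = ∑ ρ ∈ zFinset T, (zw T ρ : ℂ) * (X : ℂ) ^ (Complex.I * (ρ.im : ℂ)) := by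
  apply finsum_eq_sum_Z rh
  intro ρ hρ
  rw [hρ]; simp

lemma Fpc_zero_eq_sq (rh : RH) {X : ℝ} (hX : 0 < X) (T : ℝ) :
    Fpc X T 0 = ‖SigmaXT X T‖ ^ 2 := by
  classical
  set F := zFinset T with hF
  have hout : Fpc X T 0 = ∑ ρ ∈ F, ∑ ρ' ∈ F, (zw T ρ : ℝ) * (zw T ρ') *
      (((X : ℂ) ^ (Complex.I * ((ρ.im - ρ'.im : ℝ) : ℂ))).re) := by
    rw [Fpc]
    have h1 : ∀ ρ : ℂ, (∑ᶠ ρ' : ℂ, (zw T ρ : ℝ) * (zw T ρ') *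
        (((X : ℂ) ^ (Complex.I * ((ρ.im - ρ'.im : ℝ) : ℂ))).re /
          (4 + (0:ℝ) ^ 2 * (ρ.im - ρ'.im) ^ 2))) =
        ∑ ρ' ∈ F, (zw T ρ : ℝ) * (zw T ρ') *
        (((X : ℂ) ^ (Complex.I * ((ρ.im - ρ'.im : ℝ) : ℂ))).re / 4) := by
      intro ρ
      have := finsum_eq_sum_Z rh T (fun ρ' => (zw T ρ : ℝ) * (zw T ρ') *
        (((X : ℂ) ^ (Complex.I * ((ρ.im - ρ'.im : ℝ) : ℂ))).re /
          (4 + (0:ℝ) ^ 2 * (ρ.im - ρ'.im) ^ 2)))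
        (fun ρ' h => by simp [h])
      rw [this]
      apply Finset.sum_congr rfl
      intro ρ' _
      norm_num
    have h2 : (∑ᶠ ρ : ℂ, ∑ᶠ ρ' : ℂ, (zw T ρ : ℝ) * (zw T ρ') *
        (((X : ℂ) ^ (Complex.I * ((ρ.im - ρ'.im : ℝ) : ℂ))).re /
          (4 + (0:ℝ) ^ 2 * (ρ.im - ρ'.im) ^ 2))) =
        ∑ ρ ∈ F, ∑ ρ' ∈ F, (zw T ρ : ℝ) * (zw T ρ') *
        (((X : ℂ) ^ (Complex.I * ((ρ.im - ρ'.im : ℝ) : ℂ))).re / 4) := by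
      rw [finsum_eq_sum_Z rh T _ (fun ρ h => by
        apply finsum_eq_zero_of_forall_eq_zero
        intro ρ'; simp [h])]
      exact Finset.sum_congr rfl (fun ρ _ => h1 ρ)
    rw [h2, Finset.mul_sum]
    apply Finset.sum_congr rfl
    intro ρ _
    rw [Finset.mul_sum]
    apply Finset.sum_congr rfl
    intro ρ' _
    ring
  rw [hout, SigmaXT_eq_sum rh X T]
  set z : ℂ := ∑ ρ ∈ F, (zw T ρ : ℂ) * (X : ℂ) ^ (Complex.I * (ρ.im : ℂ)) with hz
  have habs : ‖z‖ ^ 2 = (z * (starRingEnd ℂ) z).re := by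
    rw [Complex.mul_conj]
    simp [Complex.sq_norm]
  rw [habs]
  have hzz : z * (starRingEnd ℂ) z = ∑ ρ ∈ F, ∑ ρ' ∈ F,
      ((zw T ρ : ℝ) : ℂ) * ((zw T ρ' : ℝ) : ℂ) *
        (X : ℂ) ^ (Complex.I * ((ρ.im - ρ'.im : ℝ) : ℂ)) := by
    rw [hz, map_sum, Finset.sum_mul_sum]
    apply Finset.sum_congr rfl; intro ρ _
    apply Finset.sum_congr rfl; intro ρ' _
    rw [map_mul]
    have hc : (starRingEnd ℂ) ((zw T ρ' : ℕ) : ℂ) = ((zw T ρ' : ℕ) : ℂ) := by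
      rw [Complex.conj_natCast]
    rw [hc]
    have := cpow_I_mul_conj hX ρ.im ρ'.im
    push_cast
    calc ((zw T ρ : ℕ) : ℂ) * (X : ℂ) ^ (Complex.I * (ρ.im : ℂ)) *
        (((zw T ρ' : ℕ) : ℂ) * (starRingEnd ℂ) ((X : ℂ) ^ (Complex.I * (ρ'.im : ℂ))))
        = ((zw T ρ : ℕ) : ℂ) * ((zw T ρ' : ℕ) : ℂ) *
          ((X : ℂ) ^ (Complex.I * (ρ.im : ℂ)) *
            (starRingEnd ℂ) ((X : ℂ) ^ (Complex.I * (ρ'.im : ℂ)))) := by ring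
    _ = _ := by rw [this]; push_cast; ring
  rw [hzz, Complex.re_sum]
  apply Finset.sum_congr rfl; intro ρ _
  rw [Complex.re_sum]
  apply Finset.sum_congr rfl; intro ρ' _
  push_cast
  simp [Complex.mul_re, Complex.mul_im]

/-- the bound (4-8): Under `H(0)`, for every sufficiently small `ε > 0`,
`|Σ_{|γ| ≤ x/h} ∫_x^{x+h} u^{ρ-1} du| ≤ C h^{1/2} x^ε` for `x^{3ε} ≤ h ≤ x^{1-ε}`. -/
theorem low_zeros_sum_bound_H0 (hH : HypH0) :
    ∃ ε₀ : ℝ, 0 < ε₀ ∧ ∀ ε : ℝ, 0 < ε → ε ≤ ε₀ → ∃ C : ℝ, 0 < C ∧ ∃ x₀ : ℝ,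
      ∀ x : ℝ, x₀ ≤ x → ∀ h : ℝ, x ^ (3 * ε) ≤ h → h ≤ x ^ (1 - ε) →
        ‖∑ᶠ ρ : ℂ, (zw (x / h) ρ : ℂ) * ∫ u in x..(x + h), (u : ℂ) ^ (ρ - 1)‖
          ≤ C * h ^ ((1 : ℝ) / 2) * x ^ ε := by
  obtain ⟨rh, hF⟩ := hH
  refine ⟨1, one_pos, fun ε hε hε1 => ?_⟩
  obtain ⟨C, hC, X₀, hbd⟩ := hF (ε/2) (by positivity)
  refine ⟨Real.sqrt C + 1, by positivity, max X₀ 2, fun x hx h hh1 hh2 => ?_⟩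
  have hx2 : (2:ℝ) ≤ x := le_trans (le_max_right _ _) hx
  have hX₀x : X₀ ≤ x := le_trans (le_max_left _ _) hx
  have hx0 : (0:ℝ) < x := by linarith
  have hx1 : (1:ℝ) ≤ x := by linarith
  have h1h : (1:ℝ) ≤ h := by
    calc (1:ℝ) = x ^ (0:ℝ) := (Real.rpow_zero x).symm
    _ ≤ x ^ (3*ε) := Real.rpow_le_rpow_of_exponent_le hx1 (by positivity)
    _ ≤ h := hh1
  have hh0 : (0:ℝ) < h := by linarith
  have hhx : h ≤ x := by
    calc h ≤ x ^ (1-ε) := hh2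
    _ ≤ x ^ (1:ℝ) := Real.rpow_le_rpow_of_exponent_le hx1 (by linarith)
    _ = x := Real.rpow_one x
  set T := x / h with hT
  have hT0 : 0 < T := by positivity
  have hxeT : x ^ ε ≤ T := by
    rw [hT, show ε = 1 - (1-ε) by ring, Real.rpow_sub hx0, Real.rpow_one]
    gcongr
  have hTx : T ≤ x := by
    rw [hT]
    calc x / h ≤ x / 1 := by gcongr
    _ = x := div_one x
  have key : ∀ u : ℝ, u ∈ Set.Ioc x (x+h) →
      ‖SigmaXT u T‖ ≤ Real.sqrt (C * T * x ^ ε) := by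
    intro u hu
    have hu0 : 0 < u := lt_trans hx0 hu.1
    have hux : x ≤ u := le_of_lt hu.1
    have hue : u ^ (ε/2) ≤ x ^ ε := by
      calc u ^ (ε/2) ≤ (x^(2:ℕ)) ^ (ε/2) := by
            apply Real.rpow_le_rpow hu0.le ?_ (by positivity)
            calc u ≤ x + h := hu.2
            _ ≤ x * x := by nlinarith
            _ = x^(2:ℕ) := (sq x).symm
      _ = x ^ ε := by
            rw [← Real.rpow_natCast x 2, ← Real.rpow_mul hx0.le]
            congr 1
            push_cast
            ring
    have hFb := hbd u (le_trans hX₀x hux) T (le_trans hue hxeT) (le_trans hTx hux)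
      0 le_rfl zero_le_one
    rw [Fpc_zero_eq_sq rh hu0 T] at hFb
    have hsq : ‖SigmaXT u T‖ ^ 2 ≤ C * T * x ^ ε := by
      refine le_trans hFb ?_
      have h1 : C * T * u ^ (ε/2) ≤ C * T * x ^ ε :=
        mul_le_mul_of_nonneg_left hue (mul_pos hC hT0).le
      linarith
    exact (Real.le_sqrt (norm_nonneg _) (by positivity)).mpr hsq
  have hrw : (∑ᶠ ρ : ℂ, (zw T ρ : ℂ) * ∫ u in x..(x + h), (u : ℂ) ^ (ρ - 1))
      = ∫ u in x..(x+h), ((u:ℂ) ^ (-(1/2) : ℂ)) * SigmaXT u T := by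
    rw [finsum_eq_sum_Z rh T _ (fun ρ hρ => by simp [hρ])]
    have hint : ∀ ρ : ℂ, IntervalIntegrable (fun u : ℝ => (u:ℂ) ^ (ρ-1))
        MeasureTheory.volume x (x+h) := by
      intro ρ
      apply ContinuousOn.intervalIntegrable
      intro u hu
      have hu0 : 0 < u := by
        rw [Set.uIcc_of_le (by linarith)] at hu
        exact lt_of_lt_of_le hx0 hu.1
      exact ((continuousAt_cpow_const (Complex.ofReal_mem_slitPlane.mpr hu0)).comp
        Complex.continuous_ofReal.continuousAt).continuousWithinAt
    have hsw : ∀ ρ ∈ zFinset T, (zw T ρ : ℂ) * ∫ u in x..(x+h), (u:ℂ)^(ρ-1)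
        = ∫ u in x..(x+h), (zw T ρ : ℂ) * (u:ℂ)^(ρ-1) := fun ρ _ =>
      (intervalIntegral.integral_const_mul _ _).symm
    rw [Finset.sum_congr rfl hsw,
      ← intervalIntegral.integral_finset_sum (fun ρ _ => (hint ρ).const_mul _)]
    apply intervalIntegral.integral_congr
    intro u hu
    have hu0 : 0 < u := by
      rw [Set.uIcc_of_le (by linarith)] at hu
      exact lt_of_lt_of_le hx0 hu.1
    show (∑ ρ ∈ zFinset T, (zw T ρ : ℂ) * (u:ℂ) ^ (ρ - 1))
      = (u:ℂ) ^ (-(1/2) : ℂ) * SigmaXT u T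
    rw [SigmaXT_eq_sum rh, Finset.mul_sum]
    apply Finset.sum_congr rfl
    intro ρ hρ
    have hre : ρ.re = 1/2 := mem_zFinset_re hρ
    have hsplit : ρ - 1 = (-(1/2) : ℂ) + Complex.I * (ρ.im : ℂ) := by
      apply Complex.ext
      · simp [hre]
        norm_num
      · simp
    rw [hsplit, Complex.cpow_add _ _ (by exact_mod_cast hu0.ne' : (u:ℂ) ≠ 0)]
    ring
  rw [hrw]
  set M := x ^ (-(1/2):ℝ) * Real.sqrt (C * T * x ^ ε) with hM
  have hb : ‖∫ u in x..(x+h), ((u:ℂ) ^ (-(1/2):ℂ)) * SigmaXT u T‖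
      ≤ M * |x + h - x| := by
    apply intervalIntegral.norm_integral_le_of_norm_le_const
    intro u hu
    rw [Set.uIoc_of_le (by linarith)] at hu
    have hu0 : 0 < u := lt_trans hx0 hu.1
    rw [norm_mul,
      Complex.norm_cpow_eq_rpow_re_of_pos hu0]
    have hre : ((-(1/2) : ℂ)).re = -(1/2 : ℝ) := by simp
    rw [hre, hM]
    apply mul_le_mul
    · exact Real.rpow_le_rpow_of_nonpos hx0 hu.1.le (by norm_num)
    · exact key u hu
    · exact norm_nonneg _
    · exact Real.rpow_nonneg hx0.le _
  have habs : |x + h - x| = h := by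
    rw [show x + h - x = h by ring, abs_of_pos hh0]
  rw [habs] at hb
  refine le_trans hb ?_
  have e1 : Real.sqrt (C * T * x ^ ε) = Real.sqrt C * (Real.sqrt x / Real.sqrt h) * x^(ε/2) := by
    rw [Real.sqrt_mul (by positivity), Real.sqrt_mul hC.le, hT, Real.sqrt_div hx0.le]
    congr 1
    rw [Real.sqrt_eq_rpow, ← Real.rpow_mul hx0.le]
    congr 1
    ring
  have e2 : x ^ (-(1/2):ℝ) * Real.sqrt x = 1 := by
    rw [Real.sqrt_eq_rpow, ← Real.rpow_add hx0]
    norm_num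
  have e3 : h / Real.sqrt h = h ^ ((1:ℝ)/2) := by
    rw [Real.div_sqrt, Real.sqrt_eq_rpow]
  have hsh : Real.sqrt h ≠ 0 := by positivity
  have e4 : M * h = Real.sqrt C * x^(ε/2) * (h ^ ((1:ℝ)/2)) := by
    have e5 : M * h = (Real.sqrt C * x^(ε/2)) *
        ((x ^ (-(1/2):ℝ) * Real.sqrt x) * (h / Real.sqrt h)) := by
      rw [hM, e1]; ring
    rw [e5, e2, e3, one_mul]
  rw [e4]
  have hx' : x^(ε/2) ≤ x^ε := Real.rpow_le_rpow_of_exponent_le hx1 (by linarith)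
  have hh' : (0:ℝ) ≤ h ^ ((1:ℝ)/2) := Real.rpow_nonneg hh0.le _
  have hxe : (0:ℝ) ≤ x ^ ε := Real.rpow_nonneg hx0.le _
  nlinarith [Real.sqrt_nonneg C, mul_le_mul_of_nonneg_left hx'
    (mul_nonneg (Real.sqrt_nonneg C) hh')]

end
end

section
/- For all sufficiently large X the following holds: let 0 ≤ Y ≤ X, 1 ≤ h ≤ X, and let K be a real number with log²X ≤ K ≤ h. If there exists x₀ ∈ [X, X+Y] with |ψ(x₀+h) − ψ(x₀) − h| ≥ 5K, then every x ∈ [X, X+Y] with |x − x₀| ≤ K/log X satisfies |ψ(x+h) − ψ(x) − h| ≥ K. -/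
open scoped BigOperators

noncomputable section

attribute [local instance] Classical.propDecidable

lemma psi_mono : Monotone psi := by
  intro a b hab
  apply Finset.sum_le_sum_of_subset_of_nonneg
    (Finset.Iic_subset_Iic.2 (Nat.floor_le_floor hab))
  intro i _ _; exact ArithmeticFunction.vonMangoldt_nonneg

lemma psi_sub_psi_le (a b : ℝ) (hab : a ≤ b) (hb : 1 ≤ b) :
    psi b - psi a ≤ (b - a + 1) * Real.log b := by
  have hfl : ⌊a⌋₊ ≤ ⌊b⌋₊ := Nat.floor_le_floor hab
  have hb0 : (0:ℝ) < b := lt_of_lt_of_le one_pos hb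
  have hlogb : 0 ≤ Real.log b := Real.log_nonneg hb
  have hsd : Finset.Iic ⌊b⌋₊ \ Finset.Iic ⌊a⌋₊ = Finset.Ioc ⌊a⌋₊ ⌊b⌋₊ := by
    ext n; simp [Finset.mem_sdiff, Finset.mem_Iic, Finset.mem_Ioc]; omega
  have hsplit : psi b - psi a = ∑ n ∈ Finset.Ioc ⌊a⌋₊ ⌊b⌋₊, ArithmeticFunction.vonMangoldt n := by
    rw [psi, psi, ← hsd, Finset.sum_sdiff_eq_sub (Finset.Iic_subset_Iic.2 hfl)]
  rw [hsplit]
  have hbd : ∀ n ∈ Finset.Ioc ⌊a⌋₊ ⌊b⌋₊, ArithmeticFunction.vonMangoldt n ≤ Real.log b := by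
    intro n hn
    rw [Finset.mem_Ioc] at hn
    refine ArithmeticFunction.vonMangoldt_le_log.trans (Real.log_le_log ?_ ?_)
    · have : 0 < n := Nat.lt_of_le_of_lt (Nat.zero_le _) hn.1
      exact_mod_cast this
    · calc (n:ℝ) ≤ ⌊b⌋₊ := by exact_mod_cast hn.2
        _ ≤ b := Nat.floor_le hb0.le
  calc ∑ n ∈ Finset.Ioc ⌊a⌋₊ ⌊b⌋₊, ArithmeticFunction.vonMangoldt n
      ≤ (Finset.Ioc ⌊a⌋₊ ⌊b⌋₊).card * Real.log b := by
        simpa using Finset.sum_le_card_nsmul _ _ _ hbd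
    _ ≤ (b - a + 1) * Real.log b := by
        apply mul_le_mul_of_nonneg_right _ hlogb
        rw [Nat.card_Ioc]
        have h1 : (⌊b⌋₊:ℝ) ≤ b := Nat.floor_le hb0.le
        have h2 : a - 1 < (⌊a⌋₊:ℝ) := Nat.sub_one_lt_floor a
        have h3 : ((⌊b⌋₊ - ⌊a⌋₊ : ℕ):ℝ) = (⌊b⌋₊:ℝ) - (⌊a⌋₊:ℝ) := by
          push_cast [Nat.cast_sub hfl]; ring
        rw [h3]; linarith

lemma abs_psi_sub_le (a b M δ : ℝ) (ha1 : 1 ≤ a) (hb1 : 1 ≤ b)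
    (haM : a ≤ M) (hbM : b ≤ M) (hab : |a - b| ≤ δ) :
    |psi a - psi b| ≤ (δ + 1) * Real.log M := by
  have hM1 : (1:ℝ) ≤ M := ha1.trans haM
  have hlogM : 0 ≤ Real.log M := Real.log_nonneg hM1
  have key : ∀ u v : ℝ, 1 ≤ u → u ≤ v → v ≤ M → v - u ≤ δ →
      psi v - psi u ≤ (δ + 1) * Real.log M := by
    intro u v hu huv hvM hd
    calc psi v - psi u ≤ (v - u + 1) * Real.log v := psi_sub_psi_le u v huv (hu.trans huv)
      _ ≤ (δ + 1) * Real.log M := by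
          apply mul_le_mul (by linarith) (Real.log_le_log (by linarith) hvM)
            (Real.log_nonneg (hu.trans huv)) (by linarith)
  rcases le_total a b with h | h
  · rw [abs_sub_comm, abs_of_nonneg (by linarith [psi_mono h] : 0 ≤ psi b - psi a)]
    exact key a b ha1 h hbM (by rw [abs_sub_comm] at hab; exact (abs_le.1 hab).2.trans_eq rfl |>.trans (le_refl _) |>.trans (le_refl _))
  · rw [abs_of_nonneg (by linarith [psi_mono h] : 0 ≤ psi a - psi b)]
    exact key b a hb1 h haM (le_trans (le_abs_self _) hab)

/-- inertia of `ψ`: if `|ψ(x₀+h) - ψ(x₀) - h| ≥ 5K` for some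
`x₀ ∈ [X, X+Y]`, then `|ψ(x+h) - ψ(x) - h| ≥ K` for every `x ∈ [X, X+Y]` with
`|x - x₀| ≤ K / log X`. -/
theorem psi_inertia :
    ∃ X₀ : ℝ, ∀ X : ℝ, X₀ ≤ X → ∀ Y h K : ℝ,
      0 ≤ Y → Y ≤ X → 1 ≤ h → h ≤ X → (Real.log X) ^ 2 ≤ K → K ≤ h →
      ∀ x₀ ∈ Set.Icc X (X + Y), 5 * K ≤ |psi (x₀ + h) - psi x₀ - h| →
      ∀ x ∈ Set.Icc X (X + Y), |x - x₀| ≤ K / Real.log X →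
        K ≤ |psi (x + h) - psi x - h| := by
  refine ⟨55, fun X hX Y h K hY0 hYX hh1 hhX hK1 hKh x₀ hx₀ h5K x hx hxd ↦ ?_⟩
  have hX1 : (1:ℝ) ≤ X := by linarith
  have hL4 : (4:ℝ) ≤ Real.log X := by
    rw [Real.le_log_iff_exp_le (by linarith)]
    have h1 : Real.exp 1 < 2.7182818286 := Real.exp_one_lt_d9
    have h4 : Real.exp 4 = Real.exp 1 ^ 4 := by
      rw [← Real.exp_nat_mul]; norm_num
    have he0 : (0:ℝ) ≤ Real.exp 1 := (Real.exp_pos 1).le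
    have h5 : Real.exp 1 ^ 4 ≤ (2.7182818286:ℝ) ^ 4 :=
      pow_le_pow_left₀ he0 h1.le 4
    have h6 : (2.7182818286:ℝ) ^ 4 ≤ 55 := by norm_num
    linarith
  set L := Real.log X with hLdef
  have hL0 : (0:ℝ) < L := by linarith
  have hK0 : (0:ℝ) < K := lt_of_lt_of_le (by nlinarith) hK1
  set δ := K / L with hδdef
  have hδL : δ * L = K := div_mul_cancel₀ _ hL0.ne'
  have hδ0 : 0 < δ := div_pos hK0 hL0
  -- L ≤ δ since L^2 ≤ K
  have hLδ : L ≤ δ := by rw [hδdef, le_div_iff₀ hL0]; nlinarith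
  set M := X + Y + h with hMdef
  have hM3X : M ≤ 3 * X := by linarith
  have hlogM : Real.log M ≤ (3/2) * L := by
    have h1 : Real.log M ≤ Real.log (3 * X) :=
      Real.log_le_log (by linarith) hM3X
    have h2 : Real.log (3 * X) = Real.log 3 + L := by
      rw [Real.log_mul (by norm_num) (by linarith)]
    have h3 : Real.log 3 ≤ 2 := by
      have := Real.log_le_sub_one_of_pos (by norm_num : (0:ℝ) < 3)
      linarith
    linarith
  obtain ⟨hxl, hxu⟩ := hx
  obtain ⟨hx₀l, hx₀u⟩ := hx₀
  have b1 : |psi (x + h) - psi (x₀ + h)| ≤ (δ + 1) * Real.log M := by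
    apply abs_psi_sub_le _ _ M δ (by linarith) (by linarith) (by linarith) (by linarith)
    simpa using hxd
  have b2 : |psi x - psi x₀| ≤ (δ + 1) * Real.log M := by
    apply abs_psi_sub_le _ _ M δ (by linarith) (by linarith) (by linarith) (by linarith) hxd
  have hdiff : |(psi (x + h) - psi x - h) - (psi (x₀ + h) - psi x₀ - h)| ≤ 4 * K := by
    have htri : |(psi (x + h) - psi x - h) - (psi (x₀ + h) - psi x₀ - h)|
        ≤ |psi (x + h) - psi (x₀ + h)| + |psi x - psi x₀| := by
      have := abs_sub (psi (x + h) - psi (x₀ + h)) (psi x - psi x₀)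
      calc |(psi (x + h) - psi x - h) - (psi (x₀ + h) - psi x₀ - h)|
          = |(psi (x + h) - psi (x₀ + h)) - (psi x - psi x₀)| := by ring_nf
        _ ≤ _ := abs_sub _ _
    have hmul : (δ + 1) * Real.log M ≤ 2 * K := by
      have hlogM0 : 0 ≤ Real.log M := Real.log_nonneg (by linarith)
      calc (δ + 1) * Real.log M ≤ (δ + 1) * ((3/2) * L) :=
            mul_le_mul_of_nonneg_left hlogM (by linarith)
        _ = (3/2) * (δ * L) + (3/2) * L := by ring
        _ ≤ (3/2) * K + (3/2) * δ := by rw [hδL]; linarith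
        _ ≤ 2 * K := by
            have : δ ≤ K / 4 := by
              rw [hδdef, div_le_div_iff₀ hL0 (by norm_num)] at *
              nlinarith
            linarith
    linarith
  have htri := abs_sub_abs_le_abs_sub (psi (x₀ + h) - psi x₀ - h) (psi (x + h) - psi x - h)
  have heq : |psi (x₀ + h) - psi x₀ - h - (psi (x + h) - psi x - h)|
      = |psi (x + h) - psi x - h - (psi (x₀ + h) - psi x₀ - h)| := abs_sub_comm _ _
  linarith

end
end
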